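/- arXiv:2402.11387 — 2 statements merged into one kernel-verified Lean document; each statement's English description precedes it below -/
import Mathlib

section
/- Let H be a graph with at least one edge and no isolated edges such that k1' > k0 and k1 > k0. Then for every integer n ≥ |H|, sat(n, H) ≥ (k0 + (k1' − k0)/k1')·n/2 − c2, where c2 = (k0 + 2)(k1' − k0)/(2·k1') + (k0 + 1)²/8. -/
open SimpleGraph

/-- `G` contains a subgraph isomorphic to `H`. -/
def ContainsCopy {α β : Type*} (G : SimpleGraph α) (H : SimpleGraph β) : Prop :=
  ∃ f : β → α, Function.Injective f ∧ ∀ ⦃u v : β⦄, H.Adj u v → G.Adj (f u) (f v)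

/-- `G` is `H`-saturated: `G` is `H`-free but adding any edge creates a copy of `H`. -/
def IsSat {α β : Type*} (G : SimpleGraph α) (H : SimpleGraph β) : Prop :=
  ¬ ContainsCopy G H ∧
    ∀ x y : α, x ≠ y → ¬ G.Adj x y →
      ContainsCopy (G ⊔ SimpleGraph.fromEdgeSet {s(x, y)}) H

/-- The degree of a vertex. -/
noncomputable def deg {α : Type*} (G : SimpleGraph α) (v : α) : ℕ :=
  (G.neighborSet v).ncard

/-- `wt0 uv = max (d u) (d v) - 1`. -/
noncomputable def wt0 {β : Type*} (H : SimpleGraph β) (u v : β) : ℕ :=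
  max (deg H u) (deg H v) - 1

/-- The neighborhood of the edge `uv`: `(N(u) - v) ∪ (N(v) - u)`. -/
def edgeNbhd {β : Type*} (H : SimpleGraph β) (u v : β) : Set β :=
  (H.neighborSet u \ {v}) ∪ (H.neighborSet v \ {u})

/-- `wt1 uv`: the maximum degree of a vertex in the neighborhood of the edge `uv`. -/
noncomputable def wt1 {β : Type*} (H : SimpleGraph β) (u v : β) : ℕ :=
  sSup (deg H '' edgeNbhd H u v)

/-- `k0`: the minimum of `wt0` over the edges of `H`. -/
noncomputable def paramK0 {β : Type*} (H : SimpleGraph β) : ℕ :=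
  sInf {k | ∃ u v, H.Adj u v ∧ wt0 H u v = k}

/-- `k1`: the minimum of `wt1` over the edges of `H`. -/
noncomputable def paramK1 {β : Type*} (H : SimpleGraph β) : ℕ :=
  sInf {k | ∃ u v, H.Adj u v ∧ wt1 H u v = k}

/-- `k1'`: the minimum of `wt1` over the edges of `H` minimizing `wt0`. -/
noncomputable def paramK1p {β : Type*} (H : SimpleGraph β) : ℕ :=
  sInf {k | ∃ u v, H.Adj u v ∧ wt0 H u v = paramK0 H ∧ wt1 H u v = k}

/-- `k0'`: the minimum of `wt0` over the edges of `H` minimizing `wt1`. -/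
noncomputable def paramK0p {β : Type*} (H : SimpleGraph β) : ℕ :=
  sInf {k | ∃ u v, H.Adj u v ∧ wt1 H u v = paramK1 H ∧ wt0 H u v = k}

section AuxStmt7
open Finset

variable {β : Type*} [Fintype β] {n : ℕ}

private lemma aux_deg_le {α : Type*} [Finite α] {Γ : SimpleGraph α} {Δ : SimpleGraph β}
    {f : β → α} (hf : Function.Injective f)
    (hom : ∀ ⦃u v : β⦄, Δ.Adj u v → Γ.Adj (f u) (f v)) (w : β) :
    deg Δ w ≤ deg Γ (f w) := by
  have hsub : f '' Δ.neighborSet w ⊆ Γ.neighborSet (f w) := by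
    rintro a ⟨z, hz, rfl⟩
    exact hom hz
  calc deg Δ w = (f '' Δ.neighborSet w).ncard := (Set.ncard_image_of_injective _ hf).symm
    _ ≤ (Γ.neighborSet (f w)).ncard := Set.ncard_le_ncard hsub (Set.toFinite _)

private lemma aux_extract {H : SimpleGraph β} {G : SimpleGraph (Fin n)} (hG : IsSat G H)
    {x y : Fin n} (hxy : x ≠ y) (hna : ¬ G.Adj x y) :
    ∃ (f : β → Fin n) (u v : β), Function.Injective f ∧ H.Adj u v ∧ f u = x ∧ f v = y ∧
      ∀ ⦃a b : β⦄, H.Adj a b → (G ⊔ SimpleGraph.fromEdgeSet {s(x, y)}).Adj (f a) (f b) := by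
  obtain ⟨f, hfinj, hfhom⟩ := hG.2 x y hxy hna
  have key : ∀ ⦃a b : β⦄, H.Adj a b →
      G.Adj (f a) (f b) ∨ s(f a, f b) = s(x, y) := by
    intro a b hab
    have h := hfhom hab
    rw [SimpleGraph.sup_adj] at h
    rcases h with h | h
    · exact Or.inl h
    · rw [SimpleGraph.fromEdgeSet_adj] at h
      exact Or.inr (by simpa using h.1)
  have hex : ∃ a b, H.Adj a b ∧ s(f a, f b) = s(x, y) := by
    by_contra hcon
    push_neg at hcon
    exact hG.1 ⟨f, hfinj, fun a b hab => (key hab).resolve_right (hcon a b hab)⟩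
  obtain ⟨a, b, hab, hs⟩ := hex
  rw [Sym2.eq_iff] at hs
  rcases hs with ⟨h1, h2⟩ | ⟨h1, h2⟩
  · exact ⟨f, a, b, hfinj, hab, h1, h2, hfhom⟩
  · exact ⟨f, b, a, hfinj, hab.symm, h2, h1, hfhom⟩

private lemma aux_pair {G : SimpleGraph (Fin n)} {H : SimpleGraph β}
    (hiso : ∀ u v, H.Adj u v → (edgeNbhd H u v).Nonempty)
    (hG : IsSat G H) {x y : Fin n} (hxy : x ≠ y) (hna : ¬ G.Adj x y) :
    paramK0 H ≤ max (deg G x) (deg G y) ∧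
    (∃ z, (G.Adj x z ∨ G.Adj y z) ∧ paramK1 H ≤ deg G z) ∧
    (deg G x ≤ paramK0 H → deg G y ≤ paramK0 H →
      ∃ z, (G.Adj x z ∨ G.Adj y z) ∧ paramK1p H ≤ deg G z) := by
  obtain ⟨f, u, v, hfinj, huv, hfu, hfv, hom'⟩ := aux_extract hG hxy hna
  set G' := G ⊔ SimpleGraph.fromEdgeSet {s(x, y)} with hG'def
  have hadj : ∀ a b : Fin n, G'.Adj a b ↔ G.Adj a b ∨ (a = x ∧ b = y) ∨ (a = y ∧ b = x) := by
    intro a b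
    rw [hG'def, SimpleGraph.sup_adj, SimpleGraph.fromEdgeSet_adj]
    simp only [Set.mem_singleton_iff, Sym2.eq_iff]
    constructor
    · rintro (h | ⟨⟨rfl, rfl⟩ | ⟨rfl, rfl⟩, hne⟩)
      · exact Or.inl h
      · exact Or.inr (Or.inl ⟨rfl, rfl⟩)
      · exact Or.inr (Or.inr ⟨rfl, rfl⟩)
    · rintro (h | ⟨rfl, rfl⟩ | ⟨rfl, rfl⟩)
      · exact Or.inl h
      · exact Or.inr ⟨Or.inl ⟨rfl, rfl⟩, hxy⟩
      · exact Or.inr ⟨Or.inr ⟨rfl, rfl⟩, hxy.symm⟩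
  have hdu : deg H u ≤ deg G x + 1 := by
    have h1 : deg H u ≤ deg G' x := hfu ▸ aux_deg_le hfinj hom' u
    have h2 : G'.neighborSet x ⊆ insert y (G.neighborSet x) := by
      intro c hc
      rcases (hadj x c).1 hc with h | ⟨_, rfl⟩ | ⟨h, _⟩
      · exact Set.mem_insert_of_mem _ h
      · exact Set.mem_insert _ _
      · exact absurd h hxy
    exact h1.trans ((Set.ncard_le_ncard h2 (Set.toFinite _)).trans (Set.ncard_insert_le _ _))
  have hdv : deg H v ≤ deg G y + 1 := by
    have h1 : deg H v ≤ deg G' y := hfv ▸ aux_deg_le hfinj hom' v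
    have h2 : G'.neighborSet y ⊆ insert x (G.neighborSet y) := by
      intro c hc
      rcases (hadj y c).1 hc with h | ⟨h, _⟩ | ⟨_, rfl⟩
      · exact Set.mem_insert_of_mem _ h
      · exact absurd h hxy.symm
      · exact Set.mem_insert _ _
    exact h1.trans ((Set.ncard_le_ncard h2 (Set.toFinite _)).trans (Set.ncard_insert_le _ _))
  have hdw : ∀ w : β, f w ≠ x → f w ≠ y → deg H w ≤ deg G (f w) := by
    intro w hwx hwy
    have h1 : deg H w ≤ deg G' (f w) := aux_deg_le hfinj hom' w
    have h2 : G'.neighborSet (f w) = G.neighborSet (f w) := by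
      ext c
      simp only [SimpleGraph.mem_neighborSet]
      rw [hadj]
      constructor
      · rintro (h | ⟨hh, -⟩ | ⟨hh, -⟩)
        · exact h
        · exact absurd hh hwx
        · exact absurd hh hwy
      · exact fun h => Or.inl h
    calc deg H w ≤ deg G' (f w) := h1
      _ = deg G (f w) := by rw [deg, deg, h2]
  have hK0 : paramK0 H ≤ wt0 H u v := Nat.sInf_le ⟨u, v, huv, rfl⟩
  have hwt0le : wt0 H u v ≤ max (deg G x) (deg G y) := by
    have h1 : max (deg H u) (deg H v) ≤ max (deg G x) (deg G y) + 1 :=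
      max_le (hdu.trans (Nat.add_le_add_right (le_max_left _ _) 1))
        (hdv.trans (Nat.add_le_add_right (le_max_right _ _) 1))
    rw [wt0]
    omega
  have witness : ∀ w ∈ edgeNbhd H u v,
      ∃ z, (G.Adj x z ∨ G.Adj y z) ∧ deg H w ≤ deg G z := by
    intro w hw
    rcases hw with ⟨hwu, hwv⟩ | ⟨hwv, hwu⟩
    · have hadjuw : H.Adj u w := hwu
      have hwvne : w ≠ v := by simpa using hwv
      have hfwx : f w ≠ x := fun he => hadjuw.ne ((hfinj (he.trans hfu.symm)).symm)
      have hfwy : f w ≠ y := fun he => hwvne (hfinj (he.trans hfv.symm))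
      have hGadj : G.Adj x (f w) := by
        have h' : G'.Adj x (f w) := hfu ▸ hom' hadjuw
        rcases (hadj x (f w)).1 h' with h'' | ⟨-, h2⟩ | ⟨h1, -⟩
        · exact h''
        · exact absurd h2 hfwy
        · exact absurd h1 hxy
      exact ⟨f w, Or.inl hGadj, hdw w hfwx hfwy⟩
    · have hadjvw : H.Adj v w := hwv
      have hwune : w ≠ u := by simpa using hwu
      have hfwy : f w ≠ y := fun he => hadjvw.ne ((hfinj (he.trans hfv.symm)).symm)
      have hfwx : f w ≠ x := fun he => hwune (hfinj (he.trans hfu.symm))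
      have hGadj : G.Adj y (f w) := by
        have h' : G'.Adj y (f w) := hfv ▸ hom' hadjvw
        rcases (hadj y (f w)).1 h' with h'' | ⟨h1, -⟩ | ⟨-, h2⟩
        · exact h''
        · exact absurd h1 hxy.symm
        · exact absurd h2 hfwx
      exact ⟨f w, Or.inr hGadj, hdw w hfwx hfwy⟩
  have hwt1 : ∃ w ∈ edgeNbhd H u v, deg H w = wt1 H u v := by
    have h1 : sSup (deg H '' edgeNbhd H u v) ∈ deg H '' edgeNbhd H u v :=
      Set.Nonempty.csSup_mem ((hiso u v huv).image _) (Set.toFinite _)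
    obtain ⟨w, hw, hdw'⟩ := h1
    exact ⟨w, hw, hdw'⟩
  obtain ⟨w0, hw0, hw0deg⟩ := hwt1
  refine ⟨hK0.trans hwt0le, ?_, ?_⟩
  · obtain ⟨z, hz, hzdeg⟩ := witness w0 hw0
    refine ⟨z, hz, le_trans (Nat.sInf_le ⟨u, v, huv, rfl⟩) ?_⟩
    rw [← hw0deg]
    exact hzdeg
  · intro hx hy
    have hwt0eq : wt0 H u v = paramK0 H := by
      refine le_antisymm (hwt0le.trans (max_le hx hy)) hK0
    have hle : paramK1p H ≤ wt1 H u v := Nat.sInf_le ⟨u, v, huv, hwt0eq, rfl⟩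
    obtain ⟨z, hz, hzdeg⟩ := witness w0 hw0
    refine ⟨z, hz, hle.trans ?_⟩
    rw [← hw0deg]
    exact hzdeg

end AuxStmt7

set_option maxHeartbeats 2000000 in
/-- Lemma (general, part 1, second bound): if `k1' > k0` and `k1 > k0` then
`sat(n, H) ≥ (k0 + (k1' - k0)/k1') * n/2 - c2`. -/
theorem stmt7 {β : Type*} [Fintype β] (H : SimpleGraph β)
    (hedge : ∃ u v, H.Adj u v)
    (hiso : ∀ u v, H.Adj u v → (edgeNbhd H u v).Nonempty)
    (hk : paramK0 H < paramK1p H) (hk1 : paramK0 H < paramK1 H)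
    (n : ℕ) (hn : Fintype.card β ≤ n)
    (G : SimpleGraph (Fin n)) (hG : IsSat G H) :
    ((paramK0 H : ℝ) +
        ((paramK1p H : ℝ) - (paramK0 H : ℝ)) / (paramK1p H : ℝ)) * n / 2 -
      (((paramK0 H : ℝ) + 2) * ((paramK1p H : ℝ) - (paramK0 H : ℝ)) /
          (2 * (paramK1p H : ℝ)) +
        ((paramK0 H : ℝ) + 1) ^ 2 / 8) ≤
      (G.edgeSet.ncard : ℝ) := by
  classical
  letI : DecidableRel G.Adj := Classical.decRel _
  set k0 := paramK0 H with hk0def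
  set K := paramK1p H with hKdef
  have hdeg : ∀ v : Fin n, deg G v = G.degree v := by
    intro v
    rw [deg, Set.ncard_eq_toFinset_card', SimpleGraph.degree, SimpleGraph.neighborFinset_def]
  have P0 : ∀ x y : Fin n, x ≠ y → ¬ G.Adj x y →
      k0 ≤ max (G.degree x) (G.degree y) := by
    intro x y h1 h2
    have h := (aux_pair hiso hG h1 h2).1
    rwa [hdeg, hdeg] at h
  have P2 : ∀ x y : Fin n, x ≠ y → ¬ G.Adj x y →
      ∃ z, (G.Adj x z ∨ G.Adj y z) ∧ paramK1 H ≤ G.degree z := by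
    intro x y h1 h2
    obtain ⟨z, hz1, hz2⟩ := (aux_pair hiso hG h1 h2).2.1
    exact ⟨z, hz1, by rwa [hdeg] at hz2⟩
  have P1 : ∀ x y : Fin n, x ≠ y → ¬ G.Adj x y → G.degree x ≤ k0 → G.degree y ≤ k0 →
      ∃ z, (G.Adj x z ∨ G.Adj y z) ∧ K ≤ G.degree z := by
    intro x y h1 h2 h3 h4
    obtain ⟨z, hz1, hz2⟩ := (aux_pair hiso hG h1 h2).2.2
      (by rwa [hdeg]) (by rwa [hdeg])
    exact ⟨z, hz1, by rwa [hdeg] at hz2⟩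
  set S : Finset (Fin n) := Finset.univ.filter (fun v => G.degree v < k0) with hSdef
  set A : Finset (Fin n) := Finset.univ.filter
    (fun v => G.degree v ≤ k0 ∧ ∀ z, G.Adj v z → G.degree z < K) with hAdef
  set B : Finset (Fin n) := Finset.univ.filter (fun v => K ≤ G.degree v) with hBdef
  set Bad : Finset (Fin n) := Finset.univ.filter
    (fun v => K ≤ G.degree v ∧ ∀ z, G.Adj v z → G.degree z ≤ k0) with hBaddef
  set Low : Finset (Fin n) := Finset.univ.filter (fun v => G.degree v ≤ k0) with hLowdef
  have hmS : ∀ v, v ∈ S ↔ G.degree v < k0 := fun v => by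
    rw [hSdef, Finset.mem_filter]; simp
  have hmA : ∀ v, v ∈ A ↔ (G.degree v ≤ k0 ∧ ∀ z, G.Adj v z → G.degree z < K) := fun v => by
    rw [hAdef, Finset.mem_filter]; simp
  have hmB : ∀ v, v ∈ B ↔ K ≤ G.degree v := fun v => by
    rw [hBdef, Finset.mem_filter]; simp
  have hmBad : ∀ v, v ∈ Bad ↔ (K ≤ G.degree v ∧ ∀ z, G.Adj v z → G.degree z ≤ k0) := fun v => by
    rw [hBaddef, Finset.mem_filter]; simp
  have hmLow : ∀ v, v ∈ Low ↔ G.degree v ≤ k0 := fun v => by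
    rw [hLowdef, Finset.mem_filter]; simp
  have hKpos : 0 < K := lt_of_le_of_lt (Nat.zero_le k0) hk
  -- clique bounds
  have hScard : ∀ v ∈ S, S.card ≤ G.degree v + 1 := by
    intro v hv
    have hsub : S ⊆ insert v (G.neighborFinset v) := by
      intro u hu
      by_cases huv : u = v
      · exact huv ▸ Finset.mem_insert_self _ _
      · have hadj : G.Adj v u := by
          by_contra hnadj
          have hmax := P0 v u (Ne.symm huv) hnadj
          rw [hmS] at hu hv
          rcases le_max_iff.mp hmax with h | h <;> omega
        exact Finset.mem_insert_of_mem ((SimpleGraph.mem_neighborFinset _ _ _).2 hadj)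
    calc S.card ≤ (insert v (G.neighborFinset v)).card := Finset.card_le_card hsub
      _ ≤ (G.neighborFinset v).card + 1 := Finset.card_insert_le _ _
  have hAcard : A.card ≤ k0 + 1 := by
    rcases Finset.eq_empty_or_nonempty A with he | ⟨v, hv⟩
    · rw [he]; simp
    · have hsub : A ⊆ insert v (G.neighborFinset v) := by
        intro u hu
        by_cases huv : u = v
        · exact huv ▸ Finset.mem_insert_self _ _
        · have hadj : G.Adj v u := by
            by_contra hnadj
            rw [hmA] at hu hv
            obtain ⟨z, hz1, hz2⟩ := P1 v u (Ne.symm huv) hnadj hv.1 hu.1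
            rcases hz1 with h | h
            · exact absurd hz2 (not_le.2 (hv.2 z h))
            · exact absurd hz2 (not_le.2 (hu.2 z h))
          exact Finset.mem_insert_of_mem ((SimpleGraph.mem_neighborFinset _ _ _).2 hadj)
      have h1 : A.card ≤ (G.neighborFinset v).card + 1 :=
        (Finset.card_le_card hsub).trans (Finset.card_insert_le _ _)
      have h2 : G.degree v ≤ k0 := ((hmA v).1 hv).1
      rw [SimpleGraph.degree] at h2
      omega
  have hBadcard : Bad.card ≤ 1 := by
    rw [Finset.card_le_one]
    intro a ha b hb
    by_contra hab
    rw [hmBad] at ha hb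
    have hnadj : ¬ G.Adj a b := by
      intro h
      have h1 := ha.2 b h
      have h2 := hb.1
      omega
    obtain ⟨z, hz1, hz2⟩ := P2 a b hab hnadj
    have hzk : G.degree z ≤ k0 := by
      rcases hz1 with h | h
      · exact ha.2 z h
      · exact hb.2 z h
    omega
  -- double counting
  set l : Fin n → ℕ :=
    fun b => (Finset.univ.filter (fun z => G.Adj b z ∧ G.degree z ≤ k0)).card with hldef
  have hDC : (Low \ A).card ≤ ∑ b ∈ B, l b := by
    have h1 : ∀ b, l b = ∑ v : Fin n, if G.Adj b v ∧ G.degree v ≤ k0 then 1 else 0 := by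
      intro b
      rw [hldef]
      exact Finset.card_filter _ _
    calc (Low \ A).card = ∑ _v ∈ Low \ A, 1 := (Finset.card_eq_sum_ones _)
      _ ≤ ∑ v ∈ Low \ A, (∑ b ∈ B, if G.Adj b v ∧ G.degree v ≤ k0 then 1 else 0) := by
          apply Finset.sum_le_sum
          intro v hv
          rw [Finset.mem_sdiff] at hv
          have hvlow : G.degree v ≤ k0 := (hmLow v).1 hv.1
          have hz : ∃ z, G.Adj v z ∧ K ≤ G.degree z := by
            have h := hv.2
            rw [hmA] at h
            push_neg at h
            obtain ⟨z, hz1, hz2⟩ := h hvlow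
            exact ⟨z, hz1, hz2⟩
          obtain ⟨z, hz1, hz2⟩ := hz
          have hzB : z ∈ B := (hmB z).2 hz2
          calc 1 = (if G.Adj z v ∧ G.degree v ≤ k0 then 1 else 0) := by
                rw [if_pos ⟨hz1.symm, hvlow⟩]
            _ ≤ ∑ b ∈ B, if G.Adj b v ∧ G.degree v ≤ k0 then 1 else 0 :=
                Finset.single_le_sum
                  (f := fun b => if G.Adj b v ∧ G.degree v ≤ k0 then 1 else 0)
                  (fun i _ => Nat.zero_le _) hzB
      _ ≤ ∑ v : Fin n, (∑ b ∈ B, if G.Adj b v ∧ G.degree v ≤ k0 then 1 else 0) :=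
          Finset.sum_le_sum_of_subset (Finset.subset_univ _)
      _ = ∑ b ∈ B, ∑ v : Fin n, (if G.Adj b v ∧ G.degree v ≤ k0 then 1 else 0) :=
          Finset.sum_comm
      _ = ∑ b ∈ B, l b := by
          refine Finset.sum_congr rfl fun b _ => ?_
          rw [h1]
  -- real arithmetic setup
  set e : ℕ := G.edgeFinset.card with hedef
  have hhs : ∑ v : Fin n, G.degree v = 2 * e := G.sum_degrees_eq_twice_card_edges
  set ε : ℝ := ((K : ℝ) - (k0 : ℝ)) / (K : ℝ) with hεdef
  have hKR : (0 : ℝ) < K := by exact_mod_cast hKpos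
  have hkkR : (k0 : ℝ) ≤ (K : ℝ) := by exact_mod_cast hk.le
  have hε0 : 0 ≤ ε := div_nonneg (by linarith) hKR.le
  have hε1 : ε ≤ 1 := by
    rw [hεdef, div_le_one hKR]
    have : (0:ℝ) ≤ (k0:ℝ) := Nat.cast_nonneg _
    linarith
  have hKε : (K : ℝ) * (1 - ε) = k0 := by
    rw [hεdef]
    field_simp
    ring
  -- per-vertex inequality
  have hPV : ∀ v : Fin n,
      (k0 : ℝ) + ε - ((if v ∈ S then (k0 : ℝ) - G.degree v else 0) +
          (if v ∈ A then ε else 0) + (if v ∈ Bad then ε else 0)) ≤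
        (G.degree v : ℝ) - (if v ∈ B then ε * l v else 0) +
          (if v ∈ Low \ A then ε else 0) := by
    intro v
    by_cases hB : v ∈ B
    · have hKd : K ≤ G.degree v := (hmB v).1 hB
      have hnS : v ∉ S := by rw [hmS]; omega
      have hnA : v ∉ A := by
        rw [hmA]
        rintro ⟨h1, -⟩
        omega
      have hnLA : v ∉ Low \ A := by
        intro h
        rw [Finset.mem_sdiff, hmLow] at h
        obtain ⟨h1, -⟩ := h
        omega
      have hlled : l v ≤ G.degree v := by
        have hsub : Finset.univ.filter (fun z => G.Adj v z ∧ G.degree z ≤ k0) ⊆ G.neighborFinset v := by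
          intro z hz
          rw [Finset.mem_filter] at hz
          exact (SimpleGraph.mem_neighborFinset _ _ _).2 hz.2.1
        exact Finset.card_le_card hsub
      have hKdR : (K : ℝ) ≤ (G.degree v : ℝ) := by exact_mod_cast hKd
      rw [if_pos hB, if_neg hnS, if_neg hnA, if_neg hnLA]
      by_cases hbad : v ∈ Bad
      · rw [if_pos hbad]
        have h1 : ε * (l v : ℝ) ≤ ε * (G.degree v : ℝ) :=
          mul_le_mul_of_nonneg_left (by exact_mod_cast hlled) hε0
        have h2 : (K : ℝ) * (1 - ε) ≤ (G.degree v : ℝ) * (1 - ε) :=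
          mul_le_mul_of_nonneg_right hKdR (by linarith)
        nlinarith [hKε]
      · rw [if_neg hbad]
        have hex : ∃ z, G.Adj v z ∧ k0 < G.degree z := by
          have h := hbad
          rw [hmBad] at h
          push_neg at h
          obtain ⟨z, hz1, hz2⟩ := h hKd
          exact ⟨z, hz1, hz2⟩
        obtain ⟨z, hz1, hz2⟩ := hex
        have hll : l v + 1 ≤ G.degree v := by
          have hzmem : z ∈ G.neighborFinset v := (SimpleGraph.mem_neighborFinset _ _ _).2 hz1
          have hsub : Finset.univ.filter (fun z' => G.Adj v z' ∧ G.degree z' ≤ k0) ⊆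
              (G.neighborFinset v).erase z := by
            intro z' hz'
            rw [Finset.mem_filter] at hz'
            refine Finset.mem_erase.2 ⟨?_, (SimpleGraph.mem_neighborFinset _ _ _).2 hz'.2.1⟩
            intro he
            subst he
            omega
          have hcc := Finset.card_le_card hsub
          rw [Finset.card_erase_of_mem hzmem] at hcc
          have hd1 : 1 ≤ (G.neighborFinset v).card := Finset.card_pos.2 ⟨z, hzmem⟩
          have hlv : l v = (Finset.univ.filter
              (fun z' => G.Adj v z' ∧ G.degree z' ≤ k0)).card := rfl
          have hdv' : G.degree v = (G.neighborFinset v).card := rfl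
          omega
        have h1 : ε * (l v : ℝ) ≤ ε * ((G.degree v : ℝ) - 1) := by
          refine mul_le_mul_of_nonneg_left ?_ hε0
          have : (l v : ℝ) + 1 ≤ (G.degree v : ℝ) := by exact_mod_cast hll
          linarith
        have h2 : (K : ℝ) * (1 - ε) ≤ (G.degree v : ℝ) * (1 - ε) :=
          mul_le_mul_of_nonneg_right hKdR (by linarith)
        nlinarith [hKε]
    · rw [if_neg hB]
      have hKd : G.degree v < K := by
        have h := hB
        rw [hmB] at h
        omega
      have hnbad : v ∉ Bad := fun h => hB ((hmB v).2 ((hmBad v).1 h).1)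
      rw [if_neg hnbad]
      by_cases hLow : G.degree v ≤ k0
      · by_cases hA : v ∈ A
        · have hnLA : v ∉ Low \ A := fun h => (Finset.mem_sdiff.1 h).2 hA
          rw [if_pos hA, if_neg hnLA]
          by_cases hS : v ∈ S
          · rw [if_pos hS]; linarith
          · rw [if_neg hS]
            have h1 : k0 ≤ G.degree v := by rw [hmS] at hS; omega
            have h2 : (k0 : ℝ) ≤ (G.degree v : ℝ) := by exact_mod_cast h1
            linarith
        · have hLA : v ∈ Low \ A := Finset.mem_sdiff.2 ⟨(hmLow v).2 hLow, hA⟩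
          rw [if_neg hA, if_pos hLA]
          by_cases hS : v ∈ S
          · rw [if_pos hS]; linarith
          · rw [if_neg hS]
            have h1 : k0 ≤ G.degree v := by rw [hmS] at hS; omega
            have h2 : (k0 : ℝ) ≤ (G.degree v : ℝ) := by exact_mod_cast h1
            linarith
      · have hnS : v ∉ S := by rw [hmS]; omega
        have hnA : v ∉ A := fun h => hLow ((hmA v).1 h).1
        have hnLA : v ∉ Low \ A := fun h => hLow ((hmLow v).1 (Finset.mem_sdiff.1 h).1)
        rw [if_neg hnS, if_neg hnA, if_neg hnLA]
        have h1 : k0 + 1 ≤ G.degree v := by omega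
        have h2 : (k0 : ℝ) + 1 ≤ (G.degree v : ℝ) := by exact_mod_cast h1
        linarith
  -- sum of deficiency bound
  have hsum_defb : ∑ v : Fin n, ((if v ∈ S then (k0 : ℝ) - G.degree v else 0) +
      (if v ∈ A then ε else 0) + (if v ∈ Bad then ε else 0)) ≤
      ((k0 : ℝ) + 1) ^ 2 / 4 + ε * ((k0 : ℝ) + 1) + ε := by
    rw [Finset.sum_add_distrib, Finset.sum_add_distrib]
    have hA' : ∑ v : Fin n, (if v ∈ A then ε else 0) = (A.card : ℝ) * ε := by
      rw [Finset.sum_ite_mem, Finset.univ_inter, Finset.sum_const, nsmul_eq_mul]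
    have hBad' : ∑ v : Fin n, (if v ∈ Bad then ε else 0) = (Bad.card : ℝ) * ε := by
      rw [Finset.sum_ite_mem, Finset.univ_inter, Finset.sum_const, nsmul_eq_mul]
    have hS' : ∑ v : Fin n, (if v ∈ S then (k0 : ℝ) - G.degree v else 0) =
        ∑ v ∈ S, ((k0 : ℝ) - G.degree v) := by
      rw [Finset.sum_ite_mem, Finset.univ_inter]
    have hSsum : ∑ v ∈ S, ((k0 : ℝ) - G.degree v) ≤ ((k0 : ℝ) + 1) ^ 2 / 4 := by
      have hub : ∀ v ∈ S, ((k0 : ℝ) - G.degree v) ≤ (k0 : ℝ) - ((S.card : ℝ) - 1) := by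
        intro v hv
        have h1 := hScard v hv
        have h2 : (S.card : ℝ) ≤ (G.degree v : ℝ) + 1 := by exact_mod_cast h1
        linarith
      have h3 := Finset.sum_le_card_nsmul S _ _ hub
      rw [nsmul_eq_mul] at h3
      have h4 : (0 : ℝ) ≤ (S.card : ℝ) := Nat.cast_nonneg _
      nlinarith [sq_nonneg ((k0 : ℝ) + 1 - 2 * (S.card : ℝ))]
    have hAb : (A.card : ℝ) * ε ≤ ((k0 : ℝ) + 1) * ε := by
      refine mul_le_mul_of_nonneg_right ?_ hε0
      exact_mod_cast hAcard
    have hBadb : (Bad.card : ℝ) * ε ≤ 1 * ε := by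
      refine mul_le_mul_of_nonneg_right ?_ hε0
      exact_mod_cast hBadcard
    rw [hA', hBad', hS']
    linarith
  -- transfer: sum of weights ≤ sum of degrees
  have hsum_w : ∑ v : Fin n, ((G.degree v : ℝ) - (if v ∈ B then ε * l v else 0) +
      (if v ∈ Low \ A then ε else 0)) ≤ ∑ v : Fin n, (G.degree v : ℝ) := by
    rw [Finset.sum_add_distrib, Finset.sum_sub_distrib]
    have h1 : ∑ v : Fin n, (if v ∈ Low \ A then ε else 0) = ((Low \ A).card : ℝ) * ε := by
      rw [Finset.sum_ite_mem, Finset.univ_inter, Finset.sum_const, nsmul_eq_mul]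
    have h2 : ∑ v : Fin n, (if v ∈ B then ε * l v else 0) = ∑ b ∈ B, ε * (l b : ℝ) := by
      rw [Finset.sum_ite_mem, Finset.univ_inter]
    have h3 : ∑ b ∈ B, ε * (l b : ℝ) = ε * ∑ b ∈ B, (l b : ℝ) := by
      rw [Finset.mul_sum]
    have h4 : ((Low \ A).card : ℝ) ≤ ∑ b ∈ B, (l b : ℝ) := by
      have := hDC
      calc ((Low \ A).card : ℝ) ≤ ((∑ b ∈ B, l b : ℕ) : ℝ) := by exact_mod_cast this
        _ = ∑ b ∈ B, (l b : ℝ) := by push_cast; ring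
    have h5 : ((Low \ A).card : ℝ) * ε ≤ (∑ b ∈ B, (l b : ℝ)) * ε :=
      mul_le_mul_of_nonneg_right h4 hε0
    rw [h1, h2, h3]
    linarith
  -- main inequality
  have h2e : (∑ v : Fin n, (G.degree v : ℝ)) = 2 * (e : ℝ) := by exact_mod_cast hhs
  have hmain : ((k0 : ℝ) + ε) * n - (((k0 : ℝ) + 1) ^ 2 / 4 + ε * ((k0 : ℝ) + 1) + ε) ≤
      2 * (e : ℝ) := by
    have h1 := Finset.sum_le_sum (fun v (_ : v ∈ (Finset.univ : Finset (Fin n))) => hPV v)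
    rw [Finset.sum_sub_distrib, Finset.sum_const, Finset.card_univ, Fintype.card_fin,
      nsmul_eq_mul] at h1
    linarith
  -- conclude
  have hE : (G.edgeSet.ncard : ℝ) = (e : ℝ) := by
    norm_cast
    rw [hedef, Set.ncard_eq_toFinset_card']
    congr 1
  rw [hE]
  have hexp : ((k0 : ℝ) + 2) * ((K : ℝ) - (k0 : ℝ)) / (2 * (K : ℝ)) =
      ((k0 : ℝ) + 2) / 2 * ε := by
    rw [hεdef]; ring
  rw [hexp]
  linarith
end

section
/- Let H be a graph with at least one edge and no isolated edges such that k0 = k1 < k1' < k0', and suppose k0' ≥ k1' + (k0' − k0)/(k0 + 1). Then for every integer n ≥ |H|, sat(n, H) ≥ (k0 + (k1' − k0)/k1')·n/2 − c2, where c2 = (k0 + 2)(k1' − k0)/(2·k1') + (k0 + 1)²/8. -/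
open SimpleGraph

lemma aux_copy {β : Type*} [Fintype β] {n : ℕ} (H : SimpleGraph β) (G : SimpleGraph (Fin n))
    (f : β → Fin n) (hfi : Function.Injective f)
    {x y : Fin n}
    (hom : ∀ ⦃a b⦄, H.Adj a b → (G ⊔ SimpleGraph.fromEdgeSet {s(x, y)}).Adj (f a) (f b))
    {u v : β} (huv : H.Adj u v) (hux : f u = x) (hvy : f v = y) :
    wt0 H u v ≤ max (deg G x) (deg G y) ∧
    ∀ w ∈ edgeNbhd H u v, (G.Adj x (f w) ∨ G.Adj y (f w)) ∧ deg H w ≤ deg G (f w) := by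
  have hsup : ∀ a b : Fin n, (G ⊔ SimpleGraph.fromEdgeSet {s(x, y)}).Adj a b →
      G.Adj a b ∨ (a = x ∧ b = y) ∨ (a = y ∧ b = x) := by
    intro a b hab
    simp only [SimpleGraph.sup_adj, SimpleGraph.fromEdgeSet_adj, Set.mem_singleton_iff] at hab
    rcases hab with h | ⟨hmem, hne⟩
    · exact Or.inl h
    · exact Or.inr (Sym2.eq_iff.1 hmem)
  have hend : ∀ (a : β) (c e : Fin n), f a = c →
      (∀ b ∈ H.neighborSet a, (G ⊔ SimpleGraph.fromEdgeSet {s(x, y)}).Adj c (f b)) →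
      (∀ z : Fin n, ((c = x ∧ z = y) ∨ (c = y ∧ z = x)) → z = e) →
      deg H a ≤ deg G c + 1 := by
    intro a c e hfa hadj hsp
    have himg : f '' H.neighborSet a ⊆ G.neighborSet c ∪ {e} := by
      rintro z ⟨b, hb, rfl⟩
      rcases hsup _ _ (hadj b hb) with h | h
      · exact Or.inl h
      · exact Or.inr (hsp _ h)
    calc deg H a = (f '' H.neighborSet a).ncard := (Set.ncard_image_of_injective _ hfi).symm
      _ ≤ (G.neighborSet c ∪ {e}).ncard := Set.ncard_le_ncard himg (Set.toFinite _)
      _ ≤ (G.neighborSet c).ncard + ({e} : Set (Fin n)).ncard := Set.ncard_union_le _ _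
      _ = deg G c + 1 := by rw [Set.ncard_singleton]; rfl
  have hdx : deg H u ≤ deg G x + 1 := by
    refine hend u x y hux (fun b hb => ?_) ?_
    · have := hom (show H.Adj u b from hb); rwa [hux] at this
    · rintro z (⟨h1, h2⟩ | ⟨h1, h2⟩)
      · exact h2
      · rw [h2, h1]
  have hdy : deg H v ≤ deg G y + 1 := by
    refine hend v y x hvy (fun b hb => ?_) ?_
    · have := hom (show H.Adj v b from hb); rwa [hvy] at this
    · rintro z (⟨h1, h2⟩ | ⟨h1, h2⟩)
      · rw [h2, ← h1]
      · exact h2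
  constructor
  · have : max (deg H u) (deg H v) ≤ max (deg G x) (deg G y) + 1 := by
      apply max_le
      · exact le_trans hdx (by omega)
      · exact le_trans hdy (by omega)
    have h0 : wt0 H u v = max (deg H u) (deg H v) - 1 := rfl
    omega
  · intro w hw
    have hwu : w ≠ u := by
      rcases hw with ⟨hw1, _⟩ | ⟨hw1, hw2⟩
      · exact fun h => H.loopless.irrefl u (h ▸ hw1)
      · simp only [Set.mem_singleton_iff] at hw2; exact hw2
    have hwv : w ≠ v := by
      rcases hw with ⟨hw1, hw2⟩ | ⟨hw1, _⟩
      · simp only [Set.mem_singleton_iff] at hw2; exact hw2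
      · exact fun h => H.loopless.irrefl v (h ▸ hw1)
    have hfwx : f w ≠ x := fun h => hwu (hfi (h.trans hux.symm))
    have hfwy : f w ≠ y := fun h => hwv (hfi (h.trans hvy.symm))
    have hGadj : G.Adj x (f w) ∨ G.Adj y (f w) := by
      rcases hw with ⟨hw1, _⟩ | ⟨hw1, _⟩
      · -- w ∈ N(u)
        have := hom (show H.Adj u w from hw1); rw [hux] at this
        rcases hsup _ _ this with h | ⟨_, h2⟩ | ⟨_, h2⟩
        · exact Or.inl h
        · exact absurd h2 hfwy
        · exact absurd h2 hfwx
      · have := hom (show H.Adj v w from hw1); rw [hvy] at this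
        rcases hsup _ _ this with h | ⟨_, h2⟩ | ⟨_, h2⟩
        · exact Or.inr h
        · exact absurd h2 hfwy
        · exact absurd h2 hfwx
    refine ⟨hGadj, ?_⟩
    have himg : f '' H.neighborSet w ⊆ G.neighborSet (f w) := by
      rintro z ⟨b, hb, rfl⟩
      rcases hsup _ _ (hom (show H.Adj w b from hb)) with h | ⟨h1, _⟩ | ⟨h1, _⟩
      · exact h
      · exact absurd h1 hfwx
      · exact absurd h1 hfwy
    calc deg H w = (f '' H.neighborSet w).ncard := (Set.ncard_image_of_injective _ hfi).symm
      _ ≤ (G.neighborSet (f w)).ncard := Set.ncard_le_ncard himg (Set.toFinite _)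


set_option maxHeartbeats 2000000 in
lemma counting {n : ℕ} (G : SimpleGraph (Fin n)) (k p q : ℕ)
    (hkp : k + 1 ≤ p) (hpq : p + 1 ≤ q) (hq : p * k + p ≤ q * k + k)
    (dd : Fin n → ℕ) (hdd : ∀ v, dd v = deg G v)
    (key1 : ∀ x y : Fin n, x ≠ y → ¬ G.Adj x y → k ≤ max (dd x) (dd y))
    (key2 : ∀ x y : Fin n, x ≠ y → ¬ G.Adj x y → max (dd x) (dd y) + 1 ≤ q →
       ∃ z, (G.Adj x z ∨ G.Adj y z) ∧ k + 1 ≤ dd z)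
    (key3 : ∀ x y : Fin n, x ≠ y → ¬ G.Adj x y → max (dd x) (dd y) ≤ k →
       ∃ z, (G.Adj x z ∨ G.Adj y z) ∧ p ≤ dd z) :
    ((k:ℝ) + ((p:ℝ)-k)/p) * n ≤ (∑ v, (dd v : ℝ)) + ((k:ℝ)+2)*(((p:ℝ)-k)/p) + ((k:ℝ)+1)^2/4 := by
  classical
  obtain ⟨α, hα⟩ : ∃ a : ℝ, a = ((p:ℝ)-k)/p := ⟨_, rfl⟩
  rw [← hα]
  have hp0 : (0:ℝ) < p := by
    have : 0 < p := by omega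
    exact_mod_cast this
  have hkr : (k:ℝ) ≤ p := by exact_mod_cast (by omega : k ≤ p)
  have hα0 : 0 ≤ α := by
    rw [hα]
    apply div_nonneg (by linarith) hp0.le
  have hα1 : α ≤ 1 := by
    rw [hα, div_le_one hp0]; linarith
  have hαp : α * p = (p:ℝ) - k := by
    rw [hα]; field_simp
  have h1αp : (1 - α) * p = (k:ℝ) := by nlinarith
  -- neighbor finsets
  set Nf : Fin n → Finset (Fin n) := fun v => Finset.univ.filter (fun w => G.Adj v w) with hNfdef
  have hNf : ∀ v, (Nf v).card = dd v := by
    intro v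
    rw [hdd, deg, Set.ncard_eq_toFinset_card']
    congr 1
    ext w
    simp [hNfdef, SimpleGraph.mem_neighborSet]
  -- classes
  set Lo : Finset (Fin n) := Finset.univ.filter (fun v => dd v ≤ k) with hLo
  set Cs : Finset (Fin n) := Lo.filter (fun v => ∀ z, G.Adj v z → dd z < p) with hCs
  set LoA : Finset (Fin n) := Lo \ Cs with hLoA
  set Bs : Finset (Fin n) := Finset.univ.filter (fun v => p ≤ dd v) with hBs
  set zf : Fin n → Fin n := fun x =>
    if h : ∃ z, G.Adj x z ∧ p ≤ dd z then h.choose else x with hzfdef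
  have hzf : ∀ x ∈ LoA, G.Adj x (zf x) ∧ p ≤ dd (zf x) := by
    intro x hx
    rw [hLoA, Finset.mem_sdiff] at hx
    obtain ⟨hx1, hx2⟩ := hx
    have hex : ∃ z, G.Adj x z ∧ p ≤ dd z := by
      rw [hCs, Finset.mem_filter] at hx2
      push_neg at hx2
      obtain ⟨z, hz1, hz2⟩ := hx2 hx1
      exact ⟨z, hz1, by omega⟩
    rw [hzfdef]; simp only [hex, dif_pos]
    exact hex.choose_spec
  have hLoAcard : LoA.card = ∑ z ∈ Bs, (LoA.filter (fun x => zf x = z)).card := by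
    apply Finset.card_eq_sum_card_fiberwise
    intro x hx
    rw [hBs, Finset.mem_coe, Finset.mem_filter]
    exact ⟨Finset.mem_univ _, (hzf x hx).2⟩
  obtain ⟨fib, hfibdef⟩ : ∃ F : Fin n → ℕ, F = fun z => (LoA.filter (fun x => zf x = z)).card :=
    ⟨_, rfl⟩
  rw [show (fun z => (LoA.filter (fun x => zf x = z)).card) = fib from hfibdef.symm] at hLoAcard
  have hfibsub : ∀ z, LoA.filter (fun x => zf x = z) ⊆ Nf z := by
    intro z x hx
    rw [Finset.mem_filter] at hx
    obtain ⟨hx1, hx2⟩ := hx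
    have := (hzf x hx1).1
    rw [hx2] at this
    rw [hNfdef]; simp only [Finset.mem_filter, Finset.mem_univ, true_and]
    exact this.symm
  have hfib1 : ∀ z, fib z ≤ dd z := by
    intro z
    rw [← hNf z, hfibdef]
    exact Finset.card_le_card (hfibsub z)
  have hfib2 : ∀ z, ¬ (∀ w, G.Adj z w → dd w ≤ k) → fib z + 1 ≤ dd z := by
    intro z hz
    push_neg at hz
    obtain ⟨w, hw1, hw2⟩ := hz
    have hwmem : w ∈ Nf z := by
      rw [hNfdef]; simp only [Finset.mem_filter, Finset.mem_univ, true_and]; exact hw1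
    have hwnot : w ∉ LoA.filter (fun x => zf x = z) := by
      intro hmem
      rw [Finset.mem_filter] at hmem
      have := hmem.1
      rw [hLoA, Finset.mem_sdiff, hLo, Finset.mem_filter] at this
      omega
    have hins : insert w (LoA.filter (fun x => zf x = z)) ⊆ Nf z := by
      intro a ha
      rcases Finset.mem_insert.1 ha with rfl | ha
      · exact hwmem
      · exact hfibsub z ha
    have := Finset.card_le_card hins
    rw [Finset.card_insert_of_notMem hwnot, hNf] at this
    rw [hfibdef]
    exact this
  -- Fs clique and bound
  set Fs : Finset (Fin n) := Finset.univ.filter (fun v => dd v + 1 ≤ k) with hFs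
  have hFclique : ∀ a ∈ Fs, ∀ b ∈ Fs, a ≠ b → G.Adj a b := by
    intro a ha b hb hab
    by_contra hnadj
    have := key1 a b hab hnadj
    rw [hFs, Finset.mem_filter] at ha hb
    omega
  have hFdeg : ∀ v ∈ Fs, Fs.card ≤ dd v + 1 := by
    intro v hv
    have hsub : Fs ⊆ insert v (Nf v) := by
      intro w hw
      rcases eq_or_ne w v with rfl | hwv
      · exact Finset.mem_insert_self _ _
      · apply Finset.mem_insert_of_mem
        rw [hNfdef]; simp only [Finset.mem_filter, Finset.mem_univ, true_and]
        exact hFclique v hv w hw hwv.symm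
    calc Fs.card ≤ (insert v (Nf v)).card := Finset.card_le_card hsub
      _ ≤ (Nf v).card + 1 := Finset.card_insert_le _ _
      _ = dd v + 1 := by rw [hNf]
  -- Cs bound
  have hCscard : Cs.card ≤ k + 1 := by
    rcases Cs.eq_empty_or_nonempty with he | ⟨v, hv⟩
    · rw [he]; simp
    · have hclique : ∀ a ∈ Cs, ∀ b ∈ Cs, a ≠ b → G.Adj a b := by
        intro a ha b hb hab
        by_contra hnadj
        rw [hCs, Finset.mem_filter, hLo, Finset.mem_filter] at ha hb
        obtain ⟨⟨_, ha1⟩, ha2⟩ := ha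
        obtain ⟨⟨_, hb1⟩, hb2⟩ := hb
        obtain ⟨z, hz1, hz2⟩ := key3 a b hab hnadj (by omega)
        rcases hz1 with h | h
        · exact absurd hz2 (by have := ha2 z h; omega)
        · exact absurd hz2 (by have := hb2 z h; omega)
      have hsub : Cs ⊆ insert v (Nf v) := by
        intro w hw
        rcases eq_or_ne w v with rfl | hwv
        · exact Finset.mem_insert_self _ _
        · apply Finset.mem_insert_of_mem
          rw [hNfdef]; simp only [Finset.mem_filter, Finset.mem_univ, true_and]
          exact hclique v hv w hw hwv.symm
      have hvk : dd v ≤ k := by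
        rw [hCs, Finset.mem_filter, hLo, Finset.mem_filter] at hv
        exact hv.1.2
      calc Cs.card ≤ (insert v (Nf v)).card := Finset.card_le_card hsub
        _ ≤ (Nf v).card + 1 := Finset.card_insert_le _ _
        _ = dd v + 1 := by rw [hNf]
        _ ≤ k + 1 := by omega
  -- the function g
  obtain ⟨g, hg⟩ : ∃ gg : Fin n → ℝ, gg = fun v => (k:ℝ) + α - (dd v : ℝ) := ⟨_, rfl⟩
  -- split of univ
  set Hi : Finset (Fin n) := Finset.univ.filter (fun v => ¬ dd v ≤ k) with hHi
  have hsplit1 : ∑ v ∈ Lo, g v + ∑ v ∈ Hi, g v = ∑ v, g v := by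
    rw [hLo, hHi]
    exact Finset.sum_filter_add_sum_filter_not _ _ _
  set Mid : Finset (Fin n) := Hi.filter (fun v => ¬ p ≤ dd v) with hMid
  have hHiBs : Hi.filter (fun v => p ≤ dd v) = Bs := by
    rw [hHi, hBs, Finset.filter_filter]
    apply Finset.filter_congr
    intro v _
    omega
  have hsplit2 : ∑ v ∈ Bs, g v + ∑ v ∈ Mid, g v = ∑ v ∈ Hi, g v := by
    rw [hMid, ← hHiBs]
    exact Finset.sum_filter_add_sum_filter_not _ _ _
  set B2 : Finset (Fin n) := Bs.filter (fun v => q ≤ dd v) with hB2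
  set B1 : Finset (Fin n) := Bs.filter (fun v => ¬ q ≤ dd v) with hB1
  set Up : Fin n → Prop := fun v => ∀ w, G.Adj v w → dd w ≤ k with hUp
  set B1U : Finset (Fin n) := B1.filter (fun v => Up v) with hB1U
  set B1n : Finset (Fin n) := B1.filter (fun v => ¬ Up v) with hB1n
  have hsplitB : ∀ F : Fin n → ℝ, ∑ v ∈ Bs, F v = ∑ v ∈ B1U, F v + ∑ v ∈ B1n, F v + ∑ v ∈ B2, F v := by
    intro F
    have h1 : ∑ v ∈ B2, F v + ∑ v ∈ B1, F v = ∑ v ∈ Bs, F v := by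
      rw [hB2, hB1]
      exact Finset.sum_filter_add_sum_filter_not Bs (fun v => q ≤ dd v) F
    have h2 : ∑ v ∈ B1U, F v + ∑ v ∈ B1n, F v = ∑ v ∈ B1, F v := by
      rw [hB1U, hB1n]
      exact Finset.sum_filter_add_sum_filter_not B1 Up F
    linarith
  -- B1U card
  have hB1Ucard : B1U.card ≤ 1 := by
    rw [Finset.card_le_one]
    intro a ha b hb
    by_contra hab
    rw [hB1U, Finset.mem_filter, hB1, Finset.mem_filter, hBs, Finset.mem_filter] at ha hb
    obtain ⟨⟨⟨_, ha1⟩, ha2⟩, ha3⟩ := ha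
    obtain ⟨⟨⟨_, hb1⟩, hb2⟩, hb3⟩ := hb
    by_cases hadj : G.Adj a b
    · have := ha3 b hadj
      omega
    · obtain ⟨z, hz1, hz2⟩ := key2 a b hab hadj (by omega)
      rcases hz1 with h | h
      · have := ha3 z h; omega
      · have := hb3 z h; omega
  -- bound on Lo sum
  have hLocard : (Lo.card : ℝ) = Cs.card + LoA.card := by
    have hsub : Cs ⊆ Lo := Finset.filter_subset _ _
    have := Finset.card_sdiff_of_subset hsub
    rw [← hLoA] at this
    have h2 := Finset.card_le_card hsub
    push_cast
    rw [this]
    push_cast [h2]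
    ring
  have hLoFs : Lo.filter (fun v => dd v + 1 ≤ k) = Fs := by
    rw [hLo, hFs, Finset.filter_filter]
    apply Finset.filter_congr
    intro v _
    omega
  have hFsum : ∑ v ∈ Lo, ((k:ℝ) - dd v) ≤ ((k:ℝ)+1)^2/4 := by
    have hsp : ∑ v ∈ Fs, ((k:ℝ) - dd v) + ∑ v ∈ Lo.filter (fun v => ¬ dd v + 1 ≤ k), ((k:ℝ) - dd v)
        = ∑ v ∈ Lo, ((k:ℝ) - dd v) := by
      rw [← hLoFs]
      exact Finset.sum_filter_add_sum_filter_not _ _ _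
    have hz : ∑ v ∈ Lo.filter (fun v => ¬ dd v + 1 ≤ k), ((k:ℝ) - dd v) = 0 := by
      apply Finset.sum_eq_zero
      intro v hv
      rw [Finset.mem_filter, hLo, Finset.mem_filter] at hv
      have : dd v = k := by omega
      rw [this]; ring
    have hFb : ∑ v ∈ Fs, ((k:ℝ) - dd v) ≤ Fs.card * ((k:ℝ) + 1 - Fs.card) := by
      have := Finset.sum_le_sum (s := Fs) (f := fun v => (k:ℝ) - dd v)
        (g := fun _ => (k:ℝ) + 1 - Fs.card) ?_
      · rw [Finset.sum_const, nsmul_eq_mul] at this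
        exact this
      · intro v hv
        have h1 := hFdeg v hv
        have h2 : (Fs.card : ℝ) ≤ (dd v : ℝ) + 1 := by exact_mod_cast h1
        show (k:ℝ) - dd v ≤ (k:ℝ) + 1 - Fs.card
        linarith
    have hquad : (Fs.card : ℝ) * ((k:ℝ) + 1 - Fs.card) ≤ ((k:ℝ)+1)^2/4 := by
      nlinarith [sq_nonneg ((Fs.card : ℝ) - ((k:ℝ)+1)/2)]
    linarith
  have hLosum : ∑ v ∈ Lo, g v ≤ α * Cs.card + α * LoA.card + ((k:ℝ)+1)^2/4 := by
    have hexp : ∑ v ∈ Lo, g v = α * Lo.card + ∑ v ∈ Lo, ((k:ℝ) - dd v) := by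
      have h1 : ∀ v ∈ Lo, g v = α + ((k:ℝ) - dd v) := fun v _ => by rw [hg]; ring
      rw [Finset.sum_congr rfl h1, Finset.sum_add_distrib, Finset.sum_const, nsmul_eq_mul,
        mul_comm]
    rw [hexp, hLocard]
    have := hFsum
    linarith
  -- per-element bounds on big vertices
  have hcast : (p:ℝ)*k + p ≤ (q:ℝ)*k + k := by exact_mod_cast hq
  have h1αnn : (0:ℝ) ≤ 1 - α := by linarith
  have e3 : (k:ℝ) + α - (1-α)*q ≤ 0 := by
    have hαq : α * (q:ℝ) * p = ((p:ℝ) - k) * q := by linear_combination (q:ℝ) * hαp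
    have hmul : ((k:ℝ) + α - (1-α)*q) * p = (k:ℝ)*p + p - k - (q:ℝ)*k := by
      linear_combination hαp + hαq
    have hmul' : ((k:ℝ) + α - (1-α)*q) * p ≤ 0 * p := by
      rw [hmul, zero_mul]; linarith
    exact le_of_mul_le_mul_right hmul' hp0
  have hB2b : ∀ z ∈ B2, g z + α * fib z ≤ 0 := by
    intro z hz
    rw [hB2, Finset.mem_filter] at hz
    have hdq : (q:ℝ) ≤ dd z := by exact_mod_cast hz.2
    have hf : (fib z : ℝ) ≤ dd z := by exact_mod_cast hfib1 z
    have hgz : g z = (k:ℝ) + α - dd z := by simp only [hg]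
    have e1 : g z + α * fib z ≤ (k:ℝ) + α - (1 - α) * dd z := by
      rw [hgz]
      linarith [mul_le_mul_of_nonneg_left hf hα0]
    have e2 : (1-α)*(q:ℝ) ≤ (1-α)*dd z := mul_le_mul_of_nonneg_left hdq h1αnn
    linarith
  have hB1nb : ∀ z ∈ B1n, g z + α * fib z ≤ 0 := by
    intro z hz
    rw [hB1n, Finset.mem_filter, hB1, Finset.mem_filter, hBs, Finset.mem_filter] at hz
    obtain ⟨⟨⟨_, hz1⟩, _⟩, hz3⟩ := hz
    have hfz := hfib2 z hz3
    have hf : (fib z : ℝ) ≤ (dd z : ℝ) - 1 := by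
      have : ((fib z + 1 : ℕ):ℝ) ≤ ((dd z : ℕ):ℝ) := by exact_mod_cast hfz
      push_cast at this
      linarith
    have hdp : (p:ℝ) ≤ dd z := by exact_mod_cast hz1
    have hgz : g z = (k:ℝ) + α - dd z := by simp only [hg]
    have e1 : g z + α * fib z ≤ (k:ℝ) - (1 - α) * dd z := by
      rw [hgz]
      linarith [mul_le_mul_of_nonneg_left hf hα0]
    have e2 : (1-α)*(p:ℝ) ≤ (1-α)*dd z := mul_le_mul_of_nonneg_left hdp h1αnn
    rw [h1αp] at e2
    linarith
  have hB1Ub : ∀ z ∈ B1U, g z + α * fib z ≤ α := by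
    intro z hz
    rw [hB1U, Finset.mem_filter, hB1, Finset.mem_filter, hBs, Finset.mem_filter] at hz
    obtain ⟨⟨⟨_, hz1⟩, _⟩, _⟩ := hz
    have hf : (fib z : ℝ) ≤ dd z := by exact_mod_cast hfib1 z
    have hdp : (p:ℝ) ≤ dd z := by exact_mod_cast hz1
    have hgz : g z = (k:ℝ) + α - dd z := by simp only [hg]
    have e1 : g z + α * fib z ≤ (k:ℝ) + α - (1 - α) * dd z := by
      rw [hgz]
      linarith [mul_le_mul_of_nonneg_left hf hα0]
    have e2 : (1-α)*(p:ℝ) ≤ (1-α)*dd z := mul_le_mul_of_nonneg_left hdp h1αnn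
    rw [h1αp] at e2
    linarith
  -- sum over Bs
  have hBsum : ∑ v ∈ Bs, (g v + α * fib v) ≤ α := by
    rw [hsplitB (fun v => g v + α * fib v)]
    have s1 : ∑ v ∈ B1U, (g v + α * fib v) ≤ α := by
      calc ∑ v ∈ B1U, (g v + α * fib v) ≤ B1U.card • α :=
            Finset.sum_le_card_nsmul _ _ α (fun v hv => hB1Ub v hv)
        _ = (B1U.card : ℝ) * α := by rw [nsmul_eq_mul]
        _ ≤ 1 * α := by
            apply mul_le_mul_of_nonneg_right _ hα0
            exact_mod_cast hB1Ucard
        _ = α := by ring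
    have s2 : ∑ v ∈ B1n, (g v + α * fib v) ≤ 0 := Finset.sum_nonpos hB1nb
    have s3 : ∑ v ∈ B2, (g v + α * fib v) ≤ 0 := Finset.sum_nonpos hB2b
    linarith
  have hMidsum : ∑ v ∈ Mid, g v ≤ 0 := by
    apply Finset.sum_nonpos
    intro v hv
    rw [hMid, Finset.mem_filter, hHi, Finset.mem_filter] at hv
    have h2 : (k:ℝ) + 1 ≤ dd v := by exact_mod_cast (by omega : k + 1 ≤ dd v)
    have hgv : g v = (k:ℝ) + α - dd v := by simp only [hg]
    rw [hgv]
    linarith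
  -- connect LoA.card with fibers
  have hLoAfib : α * (LoA.card : ℝ) = ∑ v ∈ Bs, α * (fib v : ℝ) := by
    rw [← Finset.mul_sum]
    congr 1
    rw [hLoAcard]
    push_cast
    rfl
  have hBsum2 : α * (LoA.card : ℝ) + ∑ v ∈ Bs, g v ≤ α := by
    rw [hLoAfib]
    rw [← Finset.sum_add_distrib]
    calc ∑ v ∈ Bs, (α * (fib v:ℝ) + g v) = ∑ v ∈ Bs, (g v + α * fib v) := by
          apply Finset.sum_congr rfl; intro v _; ring
      _ ≤ α := hBsum
  -- total
  have hCsR : α * (Cs.card : ℝ) ≤ α * ((k:ℝ)+1) := by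
    apply mul_le_mul_of_nonneg_left _ hα0
    exact_mod_cast hCscard
  have htotal : ∑ v, g v ≤ α * ((k:ℝ)+2) + ((k:ℝ)+1)^2/4 := by
    linarith [hLosum, hBsum2, hMidsum, hCsR, hsplit1, hsplit2]
  have hgsum : ∑ v, g v = ((k:ℝ) + α) * n - ∑ v, (dd v : ℝ) := by
    have h1 : ∀ v ∈ Finset.univ, g v = ((k:ℝ) + α) - dd v := fun v _ => by simp only [hg]
    rw [Finset.sum_congr rfl h1, Finset.sum_sub_distrib, Finset.sum_const, Finset.card_univ,
      Fintype.card_fin, nsmul_eq_mul, mul_comm]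
  rw [hgsum] at htotal
  linarith


/-- Lemma (general, part 2, second case): if `k0 = k1 < k1' < k0'` and
`k0' ≥ k1' + (k0' - k0)/(k0 + 1)`, then `sat(n, H) ≥ (k0 + (k1' - k0)/k1') * n/2 - c2`. -/
theorem stmt9 {β : Type*} [Fintype β] (H : SimpleGraph β)
    (hedge : ∃ u v, H.Adj u v)
    (hiso : ∀ u v, H.Adj u v → (edgeNbhd H u v).Nonempty)
    (h01 : paramK0 H = paramK1 H) (h11 : paramK1 H < paramK1p H)
    (h10 : paramK1p H < paramK0p H)
    (hcond : (paramK1p H : ℝ) +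
      ((paramK0p H : ℝ) - (paramK0 H : ℝ)) / ((paramK0 H : ℝ) + 1) ≤ (paramK0p H : ℝ))
    (n : ℕ) (hn : Fintype.card β ≤ n)
    (G : SimpleGraph (Fin n)) (hG : IsSat G H) :
    ((paramK0 H : ℝ) +
        ((paramK1p H : ℝ) - (paramK0 H : ℝ)) / (paramK1p H : ℝ)) * n / 2 -
      (((paramK0 H : ℝ) + 2) * ((paramK1p H : ℝ) - (paramK0 H : ℝ)) /
          (2 * (paramK1p H : ℝ)) +
        ((paramK0 H : ℝ) + 1) ^ 2 / 8) ≤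
      (G.edgeSet.ncard : ℝ) := by
  classical
  set k := paramK0 H with hk
  set p := paramK1p H with hp
  set q := paramK0p H with hqq
  -- facts about edges of H
  have hwt0_ge : ∀ u v, H.Adj u v → k ≤ wt0 H u v := fun u v h => Nat.sInf_le ⟨u, v, h, rfl⟩
  have hwt1_ge : ∀ u v, H.Adj u v → k ≤ wt1 H u v := fun u v h => by
    rw [h01]; exact Nat.sInf_le ⟨u, v, h, rfl⟩
  have hP3 : ∀ u v, H.Adj u v → wt0 H u v = k → p ≤ wt1 H u v := fun u v h he =>
    Nat.sInf_le ⟨u, v, h, he, rfl⟩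
  have hP2 : ∀ u v, H.Adj u v → wt1 H u v = k → q ≤ wt0 H u v := fun u v h he =>
    Nat.sInf_le ⟨u, v, h, by rw [he]; exact h01, rfl⟩
  -- numeric facts
  have hkp : k + 1 ≤ p := by
    have h1 : k = paramK1 H := h01
    omega
  have hpq : p + 1 ≤ q := h10
  have hk1pos : (0:ℝ) < (k:ℝ) + 1 := by positivity
  have hq2 : (p:ℝ)*((k:ℝ)+1) + ((q:ℝ)-(k:ℝ)) ≤ (q:ℝ)*((k:ℝ)+1) := by
    have h3 := mul_le_mul_of_nonneg_right hcond hk1pos.le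
    rw [add_mul, div_mul_cancel₀] at h3
    · linarith
    · exact ne_of_gt hk1pos
  have hq : p * k + p ≤ q * k + k := by
    have h4 : ((p*k+p : ℕ):ℝ) ≤ ((q*k+k : ℕ):ℝ) := by push_cast; nlinarith [hq2]
    exact_mod_cast h4
  -- main structural fact from saturation
  have main : ∀ x y : Fin n, x ≠ y → ¬ G.Adj x y →
      ∃ u v, H.Adj u v ∧ wt0 H u v ≤ max (deg G x) (deg G y) ∧
        ∃ z, (G.Adj x z ∨ G.Adj y z) ∧ wt1 H u v ≤ deg G z := by
    intro x y hne hnadj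
    obtain ⟨f, hfi, hfh⟩ := hG.2 x y hne hnadj
    have hnotall : ¬ ∀ ⦃a b : β⦄, H.Adj a b → G.Adj (f a) (f b) :=
      fun hall => hG.1 ⟨f, hfi, hall⟩
    obtain ⟨u, v, huv, hnG⟩ : ∃ u v, H.Adj u v ∧ ¬ G.Adj (f u) (f v) := by
      by_contra hc
      push_neg at hc
      exact hnotall (fun a b hab => hc a b hab)
    have hsupadj := hfh huv
    have hcases : (f u = x ∧ f v = y) ∨ (f u = y ∧ f v = x) := by
      simp only [SimpleGraph.sup_adj, SimpleGraph.fromEdgeSet_adj, Set.mem_singleton_iff]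
        at hsupadj
      rcases hsupadj with h | ⟨hmem, _⟩
      · exact absurd h hnG
      · exact Sym2.eq_iff.1 hmem
    -- get the max-degree vertex in the edge neighborhood
    have hwit : ∀ (a b : β), H.Adj a b → ∃ w ∈ edgeNbhd H a b, deg H w = wt1 H a b := by
      intro a b hab
      have hne2 : (deg H '' edgeNbhd H a b).Nonempty := (hiso a b hab).image _
      have hbdd : BddAbove (deg H '' edgeNbhd H a b) :=
        ((Set.toFinite _).image _).bddAbove
      have := Nat.sSup_mem hne2 hbdd
      obtain ⟨w, hw, hweq⟩ := this
      exact ⟨w, hw, hweq⟩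
    rcases hcases with ⟨hux, hvy⟩ | ⟨huy, hvx⟩
    · obtain ⟨h1, h2⟩ := aux_copy H G f hfi hfh huv hux hvy
      obtain ⟨w, hw, hweq⟩ := hwit u v huv
      obtain ⟨h3, h4⟩ := h2 w hw
      exact ⟨u, v, huv, h1, f w, h3, hweq ▸ h4⟩
    · obtain ⟨h1, h2⟩ := aux_copy H G f hfi hfh huv.symm hvx huy
      obtain ⟨w, hw, hweq⟩ := hwit v u huv.symm
      obtain ⟨h3, h4⟩ := h2 w hw
      exact ⟨v, u, huv.symm, h1, f w, h3, hweq ▸ h4⟩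
  -- the three key facts
  have key1 : ∀ x y : Fin n, x ≠ y → ¬ G.Adj x y → k ≤ max (deg G x) (deg G y) := by
    intro x y hne hnadj
    obtain ⟨u, v, huv, h1, _⟩ := main x y hne hnadj
    exact le_trans (hwt0_ge u v huv) h1
  have key2 : ∀ x y : Fin n, x ≠ y → ¬ G.Adj x y → max (deg G x) (deg G y) + 1 ≤ q →
      ∃ z, (G.Adj x z ∨ G.Adj y z) ∧ k + 1 ≤ deg G z := by
    intro x y hne hnadj hmax
    obtain ⟨u, v, huv, h1, z, hz1, hz2⟩ := main x y hne hnadj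
    refine ⟨z, hz1, ?_⟩
    have h5 : k ≤ wt1 H u v := hwt1_ge u v huv
    rcases Nat.lt_or_ge k (wt1 H u v) with h6 | h6
    · omega
    · have h7 : wt1 H u v = k := by omega
      have := hP2 u v huv h7
      omega
  have key3 : ∀ x y : Fin n, x ≠ y → ¬ G.Adj x y → max (deg G x) (deg G y) ≤ k →
      ∃ z, (G.Adj x z ∨ G.Adj y z) ∧ p ≤ deg G z := by
    intro x y hne hnadj hmax
    obtain ⟨u, v, huv, h1, z, hz1, hz2⟩ := main x y hne hnadj
    refine ⟨z, hz1, ?_⟩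
    have h5 : wt0 H u v = k := by have := hwt0_ge u v huv; omega
    have := hP3 u v huv h5
    omega
  -- counting
  have hcount := counting G k p q hkp hpq hq (fun v => deg G v) (fun v => rfl) key1 key2 key3
  -- handshake
  haveI : DecidableRel G.Adj := Classical.decRel _
  have hdegeq : ∀ v, G.degree v = deg G v := by
    intro v
    rw [deg, Set.ncard_eq_toFinset_card', Set.toFinset_card,
      SimpleGraph.card_neighborSet_eq_degree]
  have hhand : ∑ v, deg G v = 2 * G.edgeSet.ncard := by
    have h1 := SimpleGraph.sum_degrees_eq_twice_card_edges G
    have h2 : G.edgeSet.ncard = G.edgeFinset.card := by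
      rw [Set.ncard_eq_toFinset_card', SimpleGraph.edgeFinset]
    rw [h2]
    rw [← h1]
    apply Finset.sum_congr rfl
    intro v _
    exact (hdegeq v).symm
  have hhandR : ∑ v, ((deg G v : ℕ) : ℝ) = 2 * (G.edgeSet.ncard : ℝ) := by
    exact_mod_cast hhand
  have hp0 : ((p:ℕ):ℝ) ≠ 0 := Nat.cast_ne_zero.mpr (by omega)
  have hsum : (∑ v, ((fun v => deg G v) v : ℝ)) = 2 * (G.edgeSet.ncard : ℝ) := hhandR
  rw [hsum] at hcount
  have heq : ((k:ℝ)+2)*((p:ℝ)-(k:ℝ))/(2*(p:ℝ)) = (((k:ℝ)+2)*(((p:ℝ)-(k:ℝ))/(p:ℝ)))/2 := by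
    rw [← mul_div_assoc, div_div, mul_comm (2:ℝ) (p:ℝ)]
  have hfin : ((k:ℝ) + ((p:ℝ)-(k:ℝ))/(p:ℝ)) * n / 2 -
      (((k:ℝ)+2)*((p:ℝ)-(k:ℝ))/(2*(p:ℝ)) + ((k:ℝ)+1)^2/8) ≤ (G.edgeSet.ncard : ℝ) := by
    rw [heq]
    linarith [hcount]
  exact hfin
end
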